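/- Let 𝔨 be the complex Lie algebra with basis e₁,…,e₅ and nonzero brackets [e₁,e₃]=e₃, [e₁,e₄]=−e₄, [e₂,e₅]=−e₂, [e₃,e₄]=−e₁, [e₃,e₅]=−(1/2)e₃, [e₄,e₅]=(1/2)e₄. Fix s ∈ ℂ and define α_s: 𝔨 → 𝔰𝔩(4,ℂ) by sending x₁e₁+⋯+x₅e₅ to the 4×4 matrix with rows (−(3/8)x₅, 0, 0, 0), (x₁, −(1/2)x₁−(3/8)x₅, 0, x₄), (x₂, 0, (5/8)x₅, s·x₃), (x₃, −(1/2)x₃, 0, (1/8)x₅+(1/2)x₁). Then for all x,y ∈ 𝔨, the curvature [α_s(x),α_s(y)] − α_s([x,y]) equals (3/2)s(x₃y₁ − x₁y₃)·E₃₄, where E₃₄ is the elementary matrix with 1 in position (3,4). -/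

import Mathlib

open Matrix

noncomputable section

/-- The bracket on ℂ⁵ (coordinates w.r.t. the basis e₁,…,e₅) determined by
[e₁,e₃]=e₃, [e₁,e₄]=−e₄, [e₂,e₅]=−e₂, [e₃,e₄]=−e₁, [e₃,e₅]=−(1/2)e₃, [e₄,e₅]=(1/2)e₄. -/
def br5C (x y : Fin 5 → ℂ) : Fin 5 → ℂ :=
  ![-(x 2 * y 3 - x 3 * y 2),
    -(x 1 * y 4 - x 4 * y 1),
    (x 0 * y 2 - x 2 * y 0) - (1/2) * (x 2 * y 4 - x 4 * y 2),
    -(x 0 * y 3 - x 3 * y 0) + (1/2) * (x 3 * y 4 - x 4 * y 3),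
    0]

/-- The extension α_s : 𝔨 → 𝔰𝔩(4,ℂ). -/
def αCs (s : ℂ) (x : Fin 5 → ℂ) : Matrix (Fin 4) (Fin 4) ℂ :=
  !![-(3/8) * x 4, 0, 0, 0;
     x 0, -(1/2) * x 0 - (3/8) * x 4, 0, x 3;
     x 1, 0, (5/8) * x 4, s * x 2;
     x 2, -(1/2) * x 2, 0, (1/8) * x 4 + (1/2) * x 0]

set_option maxHeartbeats 2000000 in
theorem stmt11 (s : ℂ) :
    (∀ x : Fin 5 → ℂ, (αCs s x).trace = 0) ∧
    (∀ x y : Fin 5 → ℂ,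
      αCs s x * αCs s y - αCs s y * αCs s x - αCs s (br5C x y)
        = ((3/2) * s * (x 2 * y 0 - x 0 * y 2)) •
            Matrix.single (2 : Fin 4) (3 : Fin 4) (1 : ℂ)) := by
  constructor
  · intro x
    simp [αCs, Matrix.trace, Matrix.diag, Fin.sum_univ_four]
    ring
  · intro x y
    ext i j
    fin_cases i <;> fin_cases j <;>
      simp [αCs, br5C, Matrix.mul_apply, Fin.sum_univ_four, Matrix.single, Matrix.vecHead, Matrix.vecTail] <;>
      ring
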